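/- Consider n ≥ 1 asynchronous nodes with activation-time sequences s_i : ℕ → ℝ (i = 1,…,n) that are strictly increasing with τ̲ ≤ s_i(m+1) − s_i(m) ≤ τ̄ for all m, where 0 < τ̲ ≤ τ̄ < ∞, and assume all activation times are pairwise distinct (s_i(m) = s_j(l) implies i = j and m = l). Let t : ℕ → ℝ be the strictly increasing enumeration of the union of all activation times (t is strictly increasing and its range equals ∪_i range(s_i)). Set b₁ = (n − 1)·⌈τ̄/τ̲⌉ + 1. Then for every k ∈ ℕ and every node i whose first activation satisfies s_i(0) ≤ t(k), there exists m ∈ ℕ with t(k) < s_i(m) ≤ t(k + b₁); that is, each node is activated at least once within the time interval (t(k), t(k + b₁)]. -/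
import Mathlib


/-- **Lemma 1(a) of the paper.** Consider `n ≥ 1` asynchronous nodes with strictly
increasing activation-time sequences `s i` whose consecutive gaps lie in `[τl, τb]`
(`0 < τl ≤ τb`), all activation times pairwise distinct, and let `t` be the strictly
increasing enumeration of the union of all activation times. With
`b₁ = (n − 1)·⌈τb/τl⌉ + 1`, every node `i` whose first activation is not after `t k`
is activated at least once within the time interval `(t k, t (k + b₁)]`. -/
theorem node_activated_within_b1 (n : ℕ) (hn : 1 ≤ n) (s : Fin n → ℕ → ℝ)
    (τl τb : ℝ) (hτl : 0 < τl) (hττ : τl ≤ τb)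
    (hmono : ∀ i, StrictMono (s i))
    (hgap : ∀ i m, τl ≤ s i (m + 1) - s i m ∧ s i (m + 1) - s i m ≤ τb)
    (hdist : ∀ i m j l, s i m = s j l → i = j ∧ m = l)
    (t : ℕ → ℝ) (ht : StrictMono t)
    (hrange : Set.range t = ⋃ i, Set.range (s i)) :
    ∀ (k : ℕ) (i : Fin n), s i 0 ≤ t k →
      ∃ m : ℕ, t k < s i m ∧ s i m ≤ t (k + ((n - 1) * ⌈τb / τl⌉₊ + 1)) := by
  classical
  intro k i hik
  set C := ⌈τb / τl⌉₊ with hC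
  set b₁ := (n - 1) * C + 1 with hb₁
  -- growth lemma
  have hgrow : ∀ (j : Fin n) (a d : ℕ), s j a + (d : ℝ) * τl ≤ s j (a + d) := by
    intro j a d
    induction d with
    | zero => simp
    | succ d ih =>
      have hg := (hgap j (a + d)).1
      have h1 : a + (d + 1) = (a + d) + 1 := by ring
      rw [h1]
      push_cast
      nlinarith
  have hCτ : τb ≤ (C : ℝ) * τl := by
    have := Nat.le_ceil (τb / τl)
    rw [div_le_iff₀ hτl] at this
    exact this
  -- existence of an activation of i after t k
  have hex : ∃ m, t k < s i m := by
    obtain ⟨m, hm⟩ := exists_nat_gt ((t k - s i 0) / τl)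
    have h1 := hgrow i 0 m
    rw [div_lt_iff₀ hτl] at hm
    refine ⟨m, ?_⟩
    simp only [Nat.zero_add] at h1
    linarith
  set M := Nat.find hex with hMdef
  have hM : t k < s i M := Nat.find_spec hex
  have hMle : ∀ m, t k < s i m → M ≤ m := fun m hm => Nat.find_le hm
  have hM0 : M ≠ 0 := by
    intro h
    rw [h] at hM
    linarith
  have hMprev : s i (M - 1) ≤ t k := by
    have := Nat.find_min hex (m := M - 1) (by omega)
    linarith [not_lt.mp this]
  refine ⟨M, hM, ?_⟩
  by_contra hcon
  push_neg at hcon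
  -- total interval length is < τb
  have hspan : t (k + b₁) - t k < τb := by
    have hg := (hgap i (M - 1)).2
    have h1 : M - 1 + 1 = M := by omega
    rw [h1] at hg
    linarith
  -- choose node and index for each enumeration point
  have hchoice : ∀ q : ℕ, ∃ (j : Fin n) (m : ℕ), s j m = t (k + 1 + q) := by
    intro q
    have h : t (k + 1 + q) ∈ Set.range t := Set.mem_range_self _
    rw [hrange] at h
    simpa [Set.mem_iUnion, eq_comm] using h
  choose J Mq hJM using hchoice
  have hJne : ∀ q < b₁, J q ≠ i := by
    intro q hq hJq
    have h1 : t k < s (J q) (Mq q) := by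
      rw [hJM]; exact ht (by omega)
    have h2 : s (J q) (Mq q) ≤ t (k + b₁) := by
      rw [hJM]
      exact (ht.le_iff_le).mpr (by omega)
    rw [hJq] at h1 h2
    have h3 : M ≤ Mq q := hMle _ h1
    have h4 : s i M ≤ s i (Mq q) := (hmono i).le_iff_le.mpr h3
    linarith
  -- pigeonhole
  have hmaps : ∀ q ∈ Finset.range b₁, J q ∈ Finset.univ.erase i := by
    intro q hq
    exact Finset.mem_erase.mpr ⟨hJne q (Finset.mem_range.mp hq), Finset.mem_univ _⟩
  have hcard : (Finset.univ.erase i).card * C < (Finset.range b₁).card := by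
    rw [Finset.card_erase_of_mem (Finset.mem_univ i), Finset.card_univ,
      Fintype.card_fin, Finset.card_range, hb₁]
    omega
  obtain ⟨j, hj, hfib⟩ :=
    Finset.exists_lt_card_fiber_of_mul_lt_card_of_maps_to hmaps hcard
  set F := (Finset.range b₁).filter (fun q => J q = j) with hF
  have hinj : Set.InjOn Mq F := by
    intro q hq q' hq' hqq
    have hjq : J q = j := (Finset.mem_filter.mp hq).2
    have hjq' : J q' = j := (Finset.mem_filter.mp hq').2
    have : t (k + 1 + q) = t (k + 1 + q') := by
      rw [← hJM q, ← hJM q', hjq, hjq', hqq]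
    have := ht.injective this
    omega
  set T := F.image Mq with hT
  have hTcard : C < T.card := by
    rw [hT, Finset.card_image_of_injOn hinj]
    exact hfib
  have hTne : T.Nonempty := Finset.card_pos.mp (by omega)
  set a := T.min' hTne with ha
  set b := T.max' hTne with hbdef
  have hab : a ≤ b := T.min'_le _ (T.max'_mem hTne)
  have hsub : T ⊆ Finset.Icc a b := by
    intro x hx
    exact Finset.mem_Icc.mpr ⟨T.min'_le _ hx, T.le_max' _ hx⟩
  have hgapab : C ≤ b - a := by
    have := Finset.card_le_card hsub
    rw [Nat.card_Icc] at this
    omega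
  -- the min and max come from points in the interval
  obtain ⟨qa, hqaF, hqa⟩ := Finset.mem_image.mp (T.min'_mem hTne)
  obtain ⟨qb, hqbF, hqb⟩ := Finset.mem_image.mp (T.max'_mem hTne)
  have hja : J qa = j := (Finset.mem_filter.mp hqaF).2
  have hjb : J qb = j := (Finset.mem_filter.mp hqbF).2
  have hqblt : qb < b₁ := Finset.mem_range.mp (Finset.mem_filter.mp hqbF).1
  have hsa : s j a = t (k + 1 + qa) := by rw [ha, ← hqa, ← hja, hJM]
  have hsb : s j b = t (k + 1 + qb) := by rw [hbdef, ← hqb, ← hjb, hJM]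
  have h1 : t k < s j a := by rw [hsa]; exact ht (by omega)
  have h2 : s j b ≤ t (k + b₁) := by
    rw [hsb]; exact (ht.le_iff_le).mpr (by omega)
  -- span of node j's activations is ≥ C * τl ≥ τb
  have hgrowab := hgrow j a (b - a)
  have h3 : a + (b - a) = b := by omega
  rw [h3] at hgrowab
  have h4 : (C : ℝ) ≤ ((b - a : ℕ) : ℝ) := Nat.cast_le.mpr hgapab
  nlinarith
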